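/- For any real s > 20 and any p ∈ [0,1], the Max-Ratio distance between the uniform distribution U_{sp} on ⟨s·p⟩ and the distribution 2·U_s conditioned on lying in ⟨s·p⟩ satisfies Δ_MR(U_{sp}, (2·U_s)|_{⟨sp⟩}) ≤ (1 − p/2)^(−1) · (1 + 30/s). -/

import Mathlib

/-- `⟨s⟩`: the set of integers `{-⌊s/2⌋, …, ⌊s/2⌋}`. -/
noncomputable def intRange (s : ℝ) : Finset ℤ := Finset.Icc (-⌊s / 2⌋) ⌊s / 2⌋

/-- The Max-Ratio distance between two mass functions `D₀, D₁` (with the same support):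
the smallest `λ ≥ 1` such that `D₁ x ∈ [λ⁻¹·D₀ x, λ·D₀ x]` for every `x` in the support. -/
noncomputable def MRdist {α : Type*} (D₀ D₁ : α → ℝ) : ℝ :=
  sInf {l : ℝ | 1 ≤ l ∧ ∀ x, D₀ x ≠ 0 → l⁻¹ * D₀ x ≤ D₁ x ∧ D₁ x ≤ l * D₀ x}

lemma fiber_card_eq (m z : ℤ) (hz : |z| ≤ m) :
    (((Finset.Icc (-m) m ×ˢ Finset.Icc (-m) m).filter fun q => q.1 + q.2 = z).card : ℤ)
      = 2*m+1 - |z| := by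
  have hmap : ((Finset.Icc (-m) m ×ˢ Finset.Icc (-m) m).filter fun q => q.1 + q.2 = z)
      = (Finset.Icc (max (-m) (z-m)) (min m (z+m))).map
        ⟨fun x => (x, z - x), by intro a b h; simpa using (Prod.ext_iff.mp h).1⟩ := by
    ext ⟨a, b⟩
    simp only [Finset.mem_filter, Finset.mem_product, Finset.mem_Icc, Finset.mem_map,
      Function.Embedding.coeFn_mk, Prod.mk.injEq, le_max_iff, max_le_iff, le_min_iff,
      min_le_iff]
    constructor
    · rintro ⟨⟨⟨h1, h2⟩, h3, h4⟩, h5⟩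
      refine ⟨a, by omega, Prod.ext rfl ?_⟩
      show z - a = b
      omega
    · rintro ⟨x, hx, rfl, rfl⟩
      omega
  rw [hmap, Finset.card_map, Int.card_Icc]
  have := Int.abs_eq_natAbs z
  omega

lemma sum_abs_Icc (m : ℤ) : ∀ k : ℤ, 0 ≤ k →
    ∑ z ∈ Finset.Icc (-k) k, (2*m+1 - |z|) = (2*k+1)*(2*m+1) - k*(k+1) := by
  refine Int.le_induction ?_ ?_
  · norm_num
  · intro k hk ih
    have hset : Finset.Icc (-(k+1)) (k+1)
        = insert (-(k+1)) (insert (k+1) (Finset.Icc (-k) k)) := by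
      ext x
      simp only [Finset.mem_Icc, Finset.mem_insert]
      omega
    rw [hset, Finset.sum_insert (by simp only [Finset.mem_insert, Finset.mem_Icc]; omega),
      Finset.sum_insert (by simp only [Finset.mem_Icc]; omega), ih,
      abs_neg, abs_of_nonneg (by omega : (0:ℤ) ≤ k+1)]
    ring

lemma key_upper (s p K M a : ℝ) (hs : 20 < s) (hp0 : 0 ≤ p) (hp1 : p ≤ 1)
    (hK0 : 0 ≤ K) (hK : 2*K ≤ s*p) (hM : s ≤ 2*M+2) (hKM : K ≤ M) (ha0 : 0 ≤ a) :
    (2*M+1-a) * (s*(2-p)*(2*K+1)) ≤ 2*(s+30)*((2*K+1)*(2*M+1) - K*(K+1)) := by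
  have h2Ks : 2*K ≤ s := by nlinarith
  nlinarith [mul_nonneg ha0 (mul_nonneg (mul_nonneg (by linarith : (0:ℝ) ≤ s) (by linarith : (0:ℝ) ≤ 2-p)) (by linarith : (0:ℝ) ≤ 2*K+1)),
    mul_nonneg (mul_nonneg (by linarith : (0:ℝ) ≤ s*p - 2*K) (by linarith : (0:ℝ) ≤ 2*K+1)) (by linarith : (0:ℝ) ≤ 2*M+1),
    mul_nonneg (mul_nonneg (by linarith : (0:ℝ) ≤ 2*M+2-s) (by linarith : (0:ℝ) ≤ K)) (by linarith : (0:ℝ) ≤ K+30),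
    mul_nonneg (mul_nonneg (by linarith : (0:ℝ) ≤ s - 20) hK0) hK0,
    mul_nonneg (by linarith : (0:ℝ) ≤ s*p - 2*K) hK0,
    mul_nonneg hK0 (by linarith : (0:ℝ) ≤ s - 2*K),
    sq_nonneg (K - M), sq_nonneg K]

lemma key_lower (s p K M a : ℝ) (hs : 20 < s) (hp0 : 0 ≤ p) (hp1 : p ≤ 1)
    (hK0 : 0 ≤ K) (hK : 2*K ≤ s*p) (hM : s ≤ 2*M+2) (hKM : K ≤ M) (haK : a ≤ K) :
    ((2*K+1)*(2*M+1) - K*(K+1)) * (s*(2-p)) ≤ (2*M+1-a) * (2*(s+30)*(2*K+1)) := by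
  have h2Ks : 2*K ≤ s := by nlinarith
  nlinarith [mul_nonneg (mul_nonneg (by linarith : (0:ℝ) ≤ K - a) (by linarith : (0:ℝ) ≤ 2*(s+30))) (by linarith : (0:ℝ) ≤ 2*K+1),
    mul_nonneg (mul_nonneg (by linarith : (0:ℝ) ≤ s*p - 2*K) (by linarith : (0:ℝ) ≤ 2*K+1)) (by linarith : (0:ℝ) ≤ 2*M+1-K),
    mul_nonneg (mul_nonneg (by linarith : (0:ℝ) ≤ 2*M+2-s) hK0) (by linarith : (0:ℝ) ≤ 2*K+60),
    mul_nonneg (mul_nonneg hK0 hK0) (mul_nonneg (by linarith : (0:ℝ) ≤ s) hp0),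
    mul_nonneg hK0 (by linarith : (0:ℝ) ≤ s - 2*K),
    mul_nonneg (mul_nonneg hK0 hK0) (by linarith : (0:ℝ) ≤ s)]

theorem MRdist_sum_conditioned_from_uniform (s : ℝ) (hs : 20 < s)
    (p : ℝ) (hp0 : 0 ≤ p) (hp1 : p ≤ 1) :
    MRdist
      -- `U_{sp}`: the uniform distribution on `⟨s·p⟩`
      (Set.indicator (↑(intRange (s * p)) : Set ℤ) fun _ => ((intRange (s * p)).card : ℝ)⁻¹)
      -- `(2·U_s)|_{⟨sp⟩}`: the distribution of `x + y` with `x, y ← U_s` independent,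
      -- conditioned on `x + y ∈ ⟨s·p⟩`
      (Set.indicator (↑(intRange (s * p)) : Set ℤ) fun z =>
        (((intRange s ×ˢ intRange s).filter fun q => q.1 + q.2 = z).card : ℝ) /
          (((intRange s ×ˢ intRange s).filter fun q => q.1 + q.2 ∈ intRange (s * p)).card : ℝ))
      ≤ (1 - p / 2)⁻¹ * (1 + 30 / s) := by
  have hs0 : (0:ℝ) < s := by linarith
  have h2p : (0:ℝ) < 2 - p := by linarith
  set m : ℤ := ⌊s / 2⌋ with hm
  set k : ℤ := ⌊s * p / 2⌋ with hk
  -- basic facts about k and m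
  have hm10 : (10:ℤ) ≤ m := Int.le_floor.mpr (by push_cast; linarith)
  have hk0 : (0:ℤ) ≤ k := Int.le_floor.mpr (by push_cast; positivity)
  have hkm : k ≤ m := Int.floor_le_floor (by
    apply div_le_div_of_nonneg_right _ (by norm_num)
    nlinarith)
  have hkreal : (k:ℝ) ≤ s * p / 2 := Int.floor_le _
  have hmreal : s / 2 - 1 < (m:ℝ) := Int.sub_one_lt_floor _
  -- card of intRange (s*p)
  have hcard : (((intRange (s*p)).card : ℤ)) = 2*k+1 := by
    rw [intRange, Int.card_Icc]
    omega
  -- fiber cards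
  have hfib : ∀ z ∈ intRange (s*p),
      ((((intRange s ×ˢ intRange s).filter fun q => q.1 + q.2 = z).card : ℤ)) = 2*m+1 - |z| := by
    intro z hz
    rw [intRange, Finset.mem_Icc] at hz
    exact fiber_card_eq m z (by rw [abs_le]; omega)
  -- denominator card
  have hden : ((((intRange s ×ˢ intRange s).filter
        fun q => q.1 + q.2 ∈ intRange (s*p)).card : ℤ)) = (2*k+1)*(2*m+1) - k*(k+1) := by
    have h1 := Finset.card_eq_sum_card_fiberwise
      (f := fun q : ℤ × ℤ => q.1 + q.2) (t := intRange (s*p))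
      (s := (intRange s ×ˢ intRange s).filter fun q => q.1 + q.2 ∈ intRange (s*p))
      (fun q hq => (Finset.mem_filter.mp hq).2)
    have h2 : ∀ z ∈ intRange (s*p),
        (((intRange s ×ˢ intRange s).filter fun q => q.1 + q.2 ∈ intRange (s*p)).filter
          fun q => q.1 + q.2 = z)
        = ((intRange s ×ˢ intRange s).filter fun q => q.1 + q.2 = z) := by
      intro z hz
      ext q
      simp only [Finset.mem_filter]
      constructor
      · rintro ⟨⟨h, _⟩, h2⟩; exact ⟨h, h2⟩
      · rintro ⟨h, h2⟩; exact ⟨⟨h, h2 ▸ hz⟩, h2⟩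
    rw [h1]
    push_cast
    rw [← sum_abs_Icc m k hk0]
    apply Finset.sum_congr rfl
    intro z hz
    rw [h2 z hz]
    exact_mod_cast hfib z hz
  -- real versions
  let K : ℝ := (k:ℝ)
  let M : ℝ := (m:ℝ)
  have hKeq : K = (k:ℝ) := rfl
  have hMeq : M = (m:ℝ) := rfl
  have hK0 : (0:ℝ) ≤ K := by rw [hKeq]; exact_mod_cast hk0
  have hKM : K ≤ M := by rw [hKeq, hMeq]; exact_mod_cast hkm
  have hM10 : (10:ℝ) ≤ M := by rw [hMeq]; exact_mod_cast hm10
  have hKsp : 2*K ≤ s*p := by rw [hKeq]; linarith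
  have hMs : s ≤ 2*M+2 := by rw [hMeq]; linarith
  have hTpos : (0:ℝ) < (2*K+1)*(2*M+1) - K*(K+1) := by nlinarith
  have hcardR : ((intRange (s*p)).card : ℝ) = 2*K+1 := by rw [hKeq]; exact_mod_cast hcard
  have hdenR : ((((intRange s ×ˢ intRange s).filter
        fun q => q.1 + q.2 ∈ intRange (s*p)).card : ℝ)) = (2*K+1)*(2*M+1) - K*(K+1) := by
    rw [hKeq, hMeq]; exact_mod_cast hden
  -- the bound λ
  have hlam : (1 - p / 2)⁻¹ * (1 + 30 / s) = 2*(s+30) / (s*(2-p)) := by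
    field_simp
  have hlam1 : (1:ℝ) ≤ (1 - p / 2)⁻¹ * (1 + 30 / s) := by
    rw [hlam, le_div_iff₀ (by positivity)]
    nlinarith
  apply csInf_le ⟨1, fun l hl => hl.1⟩
  refine ⟨hlam1, fun z hz0 => ?_⟩
  have hzmem : z ∈ intRange (s*p) := by
    by_contra h
    exact hz0 (Set.indicator_of_notMem (by simpa using h) _)
  have hzc : (z : ℤ) ∈ (↑(intRange (s*p)) : Set ℤ) := by simpa using hzmem
  rw [Set.indicator_of_mem hzc, Set.indicator_of_mem hzc]
  have hzk : -k ≤ z ∧ z ≤ k := by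
    have : intRange (s*p) = Finset.Icc (-k) k := rfl
    rw [this, Finset.mem_Icc] at hzmem
    exact hzmem
  have hfibR : ((((intRange s ×ˢ intRange s).filter fun q => q.1 + q.2 = z).card : ℝ))
      = 2*M+1 - ((|z| : ℤ) : ℝ) := by rw [hMeq]; exact_mod_cast hfib z hzmem
  set a : ℝ := ((|z| : ℤ) : ℝ) with hadef
  have ha0 : 0 ≤ a := by positivity
  have haK : a ≤ K := by
    have : |z| ≤ k := by rw [abs_le]; omega
    rw [hadef, hKeq]; exact_mod_cast this
  rw [hcardR, hdenR, hfibR, hlam]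
  have hNpos : (0:ℝ) < 2*M+1 - a := by linarith
  have hKpos : (0:ℝ) < 2*K+1 := by linarith
  constructor
  · have heq : (2*(s+30) / (s*(2-p)))⁻¹ * (2*K+1)⁻¹
        = (s*(2-p)) / (2*(s+30)*(2*K+1)) := by
      rw [inv_div]
      field_simp
    rw [heq, div_le_div_iff₀ (by positivity) hTpos]
    linear_combination key_lower s p K M a hs hp0 hp1 hK0 hKsp hMs hKM haK
  · have heq : (2*(s+30) / (s*(2-p))) * (2*K+1)⁻¹
        = (2*(s+30)) / (s*(2-p)*(2*K+1)) := by
      field_simp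
    rw [heq, div_le_div_iff₀ hTpos (by positivity)]
    linear_combination key_upper s p K M a hs hp0 hp1 hK0 hKsp hMs hKM ha0
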